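/- (Backward error bound in terms of the condition number of V.) Let A be an invertible n×n real matrix, let U, V be n×k real matrices with V of full column rank, set λ = ‖U‖·‖V‖, κ(V) = ‖V‖·‖(VᵀV)⁻¹Vᵀ‖, β = ‖I + Vᵀ A⁻¹ U‖, and B = A + UVᵀ, with B invertible. Let X be an invertible n×n matrix with ‖X − A⁻¹‖ ≤ ε₁ where ε₁ < 1/(2‖A‖); assume I + Vᵀ X U is invertible; and let W be an invertible k×k matrix with ‖W − (I + Vᵀ X U)⁻¹‖ ≤ ε₂ such that W⁻¹ − Vᵀ X U is invertible, ε₂ < 1/(2(β + λ ε₁)), and 2(β + λ ε₁)² ε₂ < 1/2. Then the matrix X − X U W Vᵀ X is invertible and ‖B − (X − X U W Vᵀ X)⁻¹‖ ≤ 2 ε₁ ‖A‖² + 4 λ ε₂ (κ(V)‖A⁻¹B‖ + λ ε₁)². -/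

import Mathlib

open Matrix
open scoped Matrix.Norms.L2Operator

private lemma smw_norm_one_le (k : ℕ) : ‖(1 : Matrix (Fin k) (Fin k) ℝ)‖ ≤ 1 := by
  rw [Matrix.cstar_norm_def, _root_.map_one, ContinuousLinearMap.one_def]
  exact ContinuousLinearMap.norm_id_le

private lemma smw_norm_transpose {p q : ℕ} (M : Matrix (Fin p) (Fin q) ℝ) : ‖Mᵀ‖ = ‖M‖ := by
  rw [← Matrix.conjTranspose_eq_transpose_of_trivial, Matrix.l2_opNorm_conjTranspose]

private lemma smw_mul_norm_le {p q r : ℕ} {P : Matrix (Fin p) (Fin q) ℝ}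
    {Q : Matrix (Fin q) (Fin r) ℝ} {a b : ℝ} (hP : ‖P‖ ≤ a) (hQ : ‖Q‖ ≤ b) :
    ‖P * Q‖ ≤ a * b :=
  (Matrix.l2_opNorm_mul P Q).trans
    (mul_le_mul hP hQ (norm_nonneg _) ((norm_nonneg _).trans hP))

set_option maxHeartbeats 1600000 in
/-- Backward error bound in terms of the condition number κ(V) = ‖V‖·‖(VᵀV)⁻¹Vᵀ‖. -/
theorem smw_backward_error_cond_number {n k : ℕ}
    (A : Matrix (Fin n) (Fin n) ℝ) (hA : IsUnit A)
    (U V : Matrix (Fin n) (Fin k) ℝ) (hV : IsUnit (Vᵀ * V))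
    (lam : ℝ) (hlam : lam = ‖U‖ * ‖V‖)
    (κV : ℝ) (hκV : κV = ‖V‖ * ‖(Vᵀ * V)⁻¹ * Vᵀ‖)
    (β : ℝ) (hβ : β = ‖(1 : Matrix (Fin k) (Fin k) ℝ) + Vᵀ * A⁻¹ * U‖)
    (B : Matrix (Fin n) (Fin n) ℝ) (hB : B = A + U * Vᵀ) (hBinv : IsUnit B)
    (X : Matrix (Fin n) (Fin n) ℝ) (hX : IsUnit X) (ε₁ ε₂ : ℝ)
    (hXA : ‖X - A⁻¹‖ ≤ ε₁) (hε₁ : ε₁ < 1 / (2 * ‖A‖))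
    (hcapX : IsUnit ((1 : Matrix (Fin k) (Fin k) ℝ) + Vᵀ * X * U))
    (W : Matrix (Fin k) (Fin k) ℝ) (hW : IsUnit W)
    (hWcap : ‖W - ((1 : Matrix (Fin k) (Fin k) ℝ) + Vᵀ * X * U)⁻¹‖ ≤ ε₂)
    (hWinv : IsUnit (W⁻¹ - Vᵀ * X * U))
    (hε₂ : ε₂ < 1 / (2 * (β + lam * ε₁)))
    (hε₂' : 2 * (β + lam * ε₁) ^ 2 * ε₂ < 1 / 2) :
    IsUnit (X - X * U * W * Vᵀ * X) ∧
      ‖B - (X - X * U * W * Vᵀ * X)⁻¹‖ ≤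
        2 * ε₁ * ‖A‖ ^ 2 + 4 * lam * ε₂ * (κV * ‖A⁻¹ * B‖ + lam * ε₁) ^ 2 := by
  -- scalar preliminaries
  have hε₁0 : 0 ≤ ε₁ := (norm_nonneg _).trans hXA
  have hε₂0 : 0 ≤ ε₂ := (norm_nonneg _).trans hWcap
  have hlam0 : 0 ≤ lam := hlam ▸ mul_nonneg (norm_nonneg _) (norm_nonneg _)
  have hβ0 : 0 ≤ β := hβ ▸ norm_nonneg _
  set μ : ℝ := β + lam * ε₁ with hμdef
  have hμ0 : 0 ≤ μ := add_nonneg hβ0 (mul_nonneg hlam0 hε₁0)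
  have hμpos : 0 < μ := by
    rcases hμ0.lt_or_eq with h | h
    · exact h
    · exfalso; rw [← h] at hε₂; norm_num at hε₂; linarith
  have hμε₂ : μ * ε₂ < 1 / 2 := by
    have := (lt_div_iff₀ (by positivity : (0:ℝ) < 2 * μ)).mp hε₂
    nlinarith
  have hμ2ε₂ : μ ^ 2 * ε₂ < 1 / 4 := by nlinarith
  have hApos : 0 < ‖A‖ := by
    rcases (norm_nonneg A).lt_or_eq with h | h
    · exact h
    · exfalso; rw [← h] at hε₁; norm_num at hε₁; linarith
  have hAε₁ : ‖A‖ * ε₁ < 1 / 2 := by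
    have := (lt_div_iff₀ (by positivity : (0:ℝ) < 2 * ‖A‖)).mp hε₁
    nlinarith
  -- inverse identities
  have hA2 : A⁻¹ * A = 1 := nonsing_inv_mul _ ((isUnit_iff_isUnit_det _).mp hA)
  have hX1 : X * X⁻¹ = 1 := mul_nonsing_inv _ ((isUnit_iff_isUnit_det _).mp hX)
  have hX2 : X⁻¹ * X = 1 := nonsing_inv_mul _ ((isUnit_iff_isUnit_det _).mp hX)
  have hW1 : W * W⁻¹ = 1 := mul_nonsing_inv _ ((isUnit_iff_isUnit_det _).mp hW)
  have hW2 : W⁻¹ * W = 1 := nonsing_inv_mul _ ((isUnit_iff_isUnit_det _).mp hW)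
  set C : Matrix (Fin k) (Fin k) ℝ := 1 + Vᵀ * X * U with hCdef
  have hC1 : C * C⁻¹ = 1 := mul_nonsing_inv _ ((isUnit_iff_isUnit_det _).mp hcapX)
  have hC2 : C⁻¹ * C = 1 := nonsing_inv_mul _ ((isUnit_iff_isUnit_det _).mp hcapX)
  set S : Matrix (Fin k) (Fin k) ℝ := W⁻¹ - Vᵀ * X * U with hSdef
  have hS1 : S * S⁻¹ = 1 := mul_nonsing_inv _ ((isUnit_iff_isUnit_det _).mp hWinv)
  have hS2 : S⁻¹ * S = 1 := nonsing_inv_mul _ ((isUnit_iff_isUnit_det _).mp hWinv)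
  have hVV1 : (Vᵀ * V) * (Vᵀ * V)⁻¹ = 1 := mul_nonsing_inv _ ((isUnit_iff_isUnit_det _).mp hV)
  -- Step 1 : ‖X⁻¹‖ ≤ 2‖A‖ and ‖A - X⁻¹‖ ≤ 2 ε₁ ‖A‖²
  have hid1 : X⁻¹ * (X - A⁻¹) * A = A - X⁻¹ := by
    rw [mul_sub, sub_mul, hX2, one_mul, mul_assoc, hA2, mul_one]
  have hXinv_norm : ‖X⁻¹‖ ≤ 2 * ‖A‖ := by
    have h1 : ‖X⁻¹ * (X - A⁻¹) * A‖ ≤ (‖X⁻¹‖ * ε₁) * ‖A‖ :=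
      smw_mul_norm_le (smw_mul_norm_le le_rfl hXA) le_rfl
    have h2 : ‖X⁻¹‖ ≤ ‖A‖ + (‖X⁻¹‖ * ε₁) * ‖A‖ := by
      calc ‖X⁻¹‖ = ‖A - (A - X⁻¹)‖ := by rw [sub_sub_cancel]
        _ ≤ ‖A‖ + ‖A - X⁻¹‖ := norm_sub_le _ _
        _ = ‖A‖ + ‖X⁻¹ * (X - A⁻¹) * A‖ := by rw [hid1]
        _ ≤ ‖A‖ + (‖X⁻¹‖ * ε₁) * ‖A‖ := by linarith
    nlinarith [norm_nonneg X⁻¹]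
  have hAXinv : ‖A - X⁻¹‖ ≤ 2 * ε₁ * ‖A‖ ^ 2 := by
    calc ‖A - X⁻¹‖ = ‖X⁻¹ * (X - A⁻¹) * A‖ := by rw [hid1]
      _ ≤ ((2 * ‖A‖) * ε₁) * ‖A‖ := smw_mul_norm_le (smw_mul_norm_le hXinv_norm hXA) le_rfl
      _ = 2 * ε₁ * ‖A‖ ^ 2 := by ring
  -- Step 2 : ‖C‖ ≤ μ
  have hCnorm : ‖C‖ ≤ μ := by
    have hid : C = (1 + Vᵀ * A⁻¹ * U) + Vᵀ * (X - A⁻¹) * U := by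
      rw [hCdef, Matrix.mul_sub, Matrix.sub_mul]; abel
    calc ‖C‖ ≤ ‖(1 : Matrix (Fin k) (Fin k) ℝ) + Vᵀ * A⁻¹ * U‖ + ‖Vᵀ * (X - A⁻¹) * U‖ := by
          rw [hid]; exact norm_add_le _ _
      _ ≤ β + (‖V‖ * ε₁) * ‖U‖ := by
          refine add_le_add (le_of_eq hβ.symm) ?_
          exact smw_mul_norm_le (smw_mul_norm_le (le_of_eq (smw_norm_transpose V)) hXA) le_rfl
      _ = μ := by rw [hμdef, hlam]; ring
  -- Step 3 : the perturbed capacitance matrix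
  set E : Matrix (Fin k) (Fin k) ℝ := W - C⁻¹ with hEdef
  have hEnorm : ‖E‖ ≤ ε₂ := hWcap
  have hS' : S = W⁻¹ - (C - 1) := by rw [hSdef, hCdef]; abel
  have hWS : W * S = C⁻¹ + E * (1 - C) := by
    rw [hS', mul_sub, hW1, mul_sub, mul_one]
    have h2 : E * (1 - C) = W - W * C - C⁻¹ + 1 := by
      rw [hEdef, sub_mul, mul_sub, mul_sub, mul_one, mul_one, hC2]; abel
    rw [h2]; abel
  set F : Matrix (Fin k) (Fin k) ℝ := C * E * (1 - C) with hFdef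
  have hCWS : C * (W * S) = 1 + F := by
    rw [hWS, mul_add, hC1, hFdef, mul_assoc]
  have hFunit : IsUnit (1 + F) := by
    rw [← hCWS]; exact hcapX.mul (hW.mul hWinv)
  have hF1 : (1 + F) * (1 + F)⁻¹ = 1 := mul_nonsing_inv _ ((isUnit_iff_isUnit_det _).mp hFunit)
  have hF2 : (1 + F)⁻¹ * (1 + F) = 1 := nonsing_inv_mul _ ((isUnit_iff_isUnit_det _).mp hFunit)
  have hFnorm : ‖F‖ ≤ 3 / 4 := by
    have h1C : ‖(1 : Matrix (Fin k) (Fin k) ℝ) - C‖ ≤ 1 + μ :=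
      (norm_sub_le _ _).trans (add_le_add (smw_norm_one_le k) hCnorm)
    have : ‖F‖ ≤ (μ * ε₂) * (1 + μ) := by
      rw [hFdef]; exact smw_mul_norm_le (smw_mul_norm_le hCnorm hEnorm) h1C
    calc ‖F‖ ≤ μ * ε₂ * (1 + μ) := this
      _ = μ * ε₂ + μ ^ 2 * ε₂ := by ring
      _ ≤ 3 / 4 := by linarith
  have hGnorm : ‖(1 + F)⁻¹‖ ≤ 4 := by
    have h := hF1
    rw [add_mul, one_mul] at h
    have hid : (1 + F)⁻¹ = 1 - F * (1 + F)⁻¹ := eq_sub_of_add_eq h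
    have : ‖(1 + F)⁻¹‖ ≤ 1 + (3 / 4) * ‖(1 + F)⁻¹‖ := by
      calc ‖(1 + F)⁻¹‖ = ‖(1 : Matrix (Fin k) (Fin k) ℝ) - F * (1 + F)⁻¹‖ := by rw [← hid]
        _ ≤ ‖(1 : Matrix (Fin k) (Fin k) ℝ)‖ + ‖F * (1 + F)⁻¹‖ := norm_sub_le _ _
        _ ≤ 1 + (3 / 4) * ‖(1 + F)⁻¹‖ :=
            add_le_add (smw_norm_one_le k) (smw_mul_norm_le hFnorm le_rfl)
    linarith
  have hWSinv : (W * S)⁻¹ = (1 + F)⁻¹ * C := by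
    refine inv_eq_left_inv ?_
    rw [mul_assoc, hCWS, hF2]
  have hWSinv_norm : ‖(W * S)⁻¹‖ ≤ 4 * μ := by
    rw [hWSinv]; exact smw_mul_norm_le hGnorm hCnorm
  -- Step 4 : ‖S⁻¹ - 1‖ ≤ 4 μ² ε₂
  have hEC : E * C = W * C - 1 := by rw [hEdef, sub_mul, hC2]
  have h1S : (1 : Matrix (Fin k) (Fin k) ℝ) - S = W⁻¹ * (E * C) := by
    rw [hEC, mul_sub, ← mul_assoc, hW2, one_mul, mul_one, hSdef, hCdef]; abel
  have hSinv1 : S⁻¹ - 1 = (W * S)⁻¹ * (E * C) := by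
    have h3 : S⁻¹ * (1 - S) = S⁻¹ - 1 := by rw [mul_sub, mul_one, hS2]
    rw [← h3, h1S, ← Matrix.mul_assoc, ← Matrix.mul_inv_rev]
  have hSinv_norm : ‖S⁻¹ - 1‖ ≤ 4 * μ ^ 2 * ε₂ := by
    calc ‖S⁻¹ - 1‖ = ‖(W * S)⁻¹ * (E * C)‖ := by rw [hSinv1]
      _ ≤ (4 * μ) * (ε₂ * μ) := smw_mul_norm_le hWSinv_norm (smw_mul_norm_le hEnorm hCnorm)
      _ = 4 * μ ^ 2 * ε₂ := by ring
  -- Step 5 : invertibility of Y = X - XUWVᵀX and formula for its inverse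
  have hkey2 : W * (Vᵀ * X * U) * S⁻¹ = S⁻¹ - W := by
    have hT : Vᵀ * X * U = W⁻¹ - S := by rw [hSdef]; abel
    rw [hT, mul_sub, sub_mul, hW1, one_mul, mul_assoc, hS1, mul_one]
  set Z : Matrix (Fin n) (Fin n) ℝ := X⁻¹ + U * S⁻¹ * Vᵀ with hZdef
  have hYZ : (X - X * U * W * Vᵀ * X) * Z = 1 := by
    have e1 : X * Z = 1 + X * U * S⁻¹ * Vᵀ := by
      rw [hZdef, mul_add, hX1]
      simp only [Matrix.mul_assoc]
    have e2 : (X - X * U * W * Vᵀ * X) * Z = X * Z - X * U * W * Vᵀ * (X * Z) := by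
      simp only [Matrix.sub_mul, Matrix.mul_assoc]
    have e3 : X * U * W * Vᵀ * (X * U * S⁻¹ * Vᵀ) = X * U * (W * (Vᵀ * X * U) * S⁻¹) * Vᵀ := by
      simp only [Matrix.mul_assoc]
    rw [e2, e1, mul_add, mul_one, e3, hkey2]
    simp only [Matrix.mul_sub, Matrix.sub_mul, Matrix.mul_assoc]
    abel
  have hYunit : IsUnit (X - X * U * W * Vᵀ * X) := (isUnit_iff_isUnit_det _).mpr (isUnit_det_of_right_inverse hYZ)
  refine ⟨hYunit, ?_⟩
  have hYinv : (X - X * U * W * Vᵀ * X)⁻¹ = Z := inv_eq_right_inv hYZ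
  -- Step 6 : the backward error decomposition
  have hdecomp : B - Z = (A - X⁻¹) - U * (S⁻¹ - 1) * Vᵀ := by
    rw [hB, hZdef, Matrix.mul_sub, Matrix.mul_one, Matrix.sub_mul]; abel
  have hmain : ‖B - Z‖ ≤ 2 * ε₁ * ‖A‖ ^ 2 + 4 * lam * ε₂ * μ ^ 2 := by
    calc ‖B - Z‖ ≤ ‖A - X⁻¹‖ + ‖U * (S⁻¹ - 1) * Vᵀ‖ := by
          rw [hdecomp]; exact norm_sub_le _ _
      _ ≤ 2 * ε₁ * ‖A‖ ^ 2 + (‖U‖ * (4 * μ ^ 2 * ε₂)) * ‖V‖ := by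
          refine add_le_add hAXinv ?_
          exact smw_mul_norm_le (smw_mul_norm_le le_rfl hSinv_norm)
            (le_of_eq (smw_norm_transpose V))
      _ = 2 * ε₁ * ‖A‖ ^ 2 + 4 * lam * ε₂ * μ ^ 2 := by rw [hlam]; ring
  -- Step 7 : β ≤ κV * ‖A⁻¹ * B‖
  have hβbound : β ≤ κV * ‖A⁻¹ * B‖ := by
    have hid1' : Vᵀ * (A⁻¹ * B) = (1 + Vᵀ * A⁻¹ * U) * Vᵀ := by
      rw [hB, mul_add, hA2]
      simp only [Matrix.mul_add, Matrix.add_mul, Matrix.mul_one, Matrix.one_mul,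
        Matrix.mul_assoc]
    have hid2 : ((1 + Vᵀ * A⁻¹ * U) * Vᵀ) * (V * (Vᵀ * V)⁻¹) = 1 + Vᵀ * A⁻¹ * U := by
      rw [Matrix.mul_assoc (1 + Vᵀ * A⁻¹ * U) Vᵀ _, ← Matrix.mul_assoc Vᵀ V _, hVV1, Matrix.mul_one]
    have hVVT : ‖V * (Vᵀ * V)⁻¹‖ = ‖(Vᵀ * V)⁻¹ * Vᵀ‖ := by
      have ht : ((Vᵀ * V)⁻¹ * Vᵀ)ᵀ = V * (Vᵀ * V)⁻¹ := by
        rw [transpose_mul, transpose_transpose, transpose_nonsing_inv, transpose_mul,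
          transpose_transpose]
      rw [← ht, smw_norm_transpose]
    calc β = ‖(Vᵀ * (A⁻¹ * B)) * (V * (Vᵀ * V)⁻¹)‖ := by rw [hβ, ← hid2, hid1']
      _ ≤ (‖V‖ * ‖A⁻¹ * B‖) * ‖(Vᵀ * V)⁻¹ * Vᵀ‖ := by
          rw [← hVVT]
          exact smw_mul_norm_le (smw_mul_norm_le (le_of_eq (smw_norm_transpose V)) le_rfl) le_rfl
      _ = κV * ‖A⁻¹ * B‖ := by rw [hκV]; ring
  -- conclude
  rw [hYinv]
  refine hmain.trans ?_
  have hν : μ ≤ κV * ‖A⁻¹ * B‖ + lam * ε₁ := by rw [hμdef]; linarith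
  have h4 : (0:ℝ) ≤ 4 * lam * ε₂ := by positivity
  nlinarith [sq_nonneg (κV * ‖A⁻¹ * B‖ + lam * ε₁ - μ), mul_nonneg h4 (sq_nonneg μ),
    mul_nonneg (mul_nonneg h4 hμ0) (sub_nonneg.mpr hν)]
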